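/- Let A be an AP-irreducible sign pattern matrix of order n such that A[α,β] contains no + for any two distinct irreducible components α and β of A₊. Then A allows algebraic positivity. -/

import Mathlib

/-- A real square matrix is algebraically positive if some real polynomial maps it
to an entrywise (strictly) positive matrix. -/
def AlgPos {n : ℕ} (A : Matrix (Fin n) (Fin n) ℝ) : Prop :=
  ∃ p : Polynomial ℝ, ∀ i j, 0 < (Polynomial.aeval A p) i j

/-- Irreducibility of a sign pattern matrix. -/
def SPIrred {n : ℕ} (A : Matrix (Fin n) (Fin n) SignType) : Prop :=
  ∀ S : Set (Fin n), S.Nonempty → S ≠ Set.univ → ∃ i ∈ S, ∃ j ∉ S, A i j ≠ 0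

/-- The sign pattern `B_A = A₊ − (A₋)ᵀ`: its `(i,j)` entry is `+` precisely when
`a_{ij} = +` or `a_{ji} = −`, and `0` otherwise. -/
def BA {n : ℕ} (A : Matrix (Fin n) (Fin n) SignType) : Matrix (Fin n) (Fin n) SignType :=
  Matrix.of fun i j =>
    if A i j = SignType.pos ∨ A j i = SignType.neg then SignType.pos else 0

/-- `A` is AP-irreducible: `A` is irreducible, every row and every column of `A`
contains a `+`, and `B_A` is irreducible. -/
def APIrred {n : ℕ} (A : Matrix (Fin n) (Fin n) SignType) : Prop :=
  SPIrred A ∧ (∀ i, ∃ j, A i j = SignType.pos) ∧ (∀ j, ∃ i, A i j = SignType.pos) ∧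
    SPIrred (BA A)

/-- `i` and `j` lie in the same irreducible component of `A₊`, i.e. they are mutually
reachable in the digraph whose arcs are the `+` entries of `A`. -/
def SameComp {n : ℕ} (A : Matrix (Fin n) (Fin n) SignType) (i j : Fin n) : Prop :=
  Relation.ReflTransGen (fun a b => A a b = SignType.pos) i j ∧
  Relation.ReflTransGen (fun a b => A a b = SignType.pos) j i

open Matrix

variable {n : ℕ}

/-- Row sum. -/
def rsum (M : Matrix (Fin n) (Fin n) ℝ) (i : Fin n) : ℝ := ∑ j, M i j
/-- Column sum. -/
def csum (M : Matrix (Fin n) (Fin n) ℝ) (j : Fin n) : ℝ := ∑ i, M i j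

lemma rsum_add (M N : Matrix (Fin n) (Fin n) ℝ) (i : Fin n) :
    rsum (M + N) i = rsum M i + rsum N i := by
  simp [rsum, Finset.sum_add_distrib]

lemma csum_add (M N : Matrix (Fin n) (Fin n) ℝ) (j : Fin n) :
    csum (M + N) j = csum M j + csum N j := by
  simp [csum, Finset.sum_add_distrib]

lemma rsum_std (a b : Fin n) (x : Fin n) :
    rsum (Matrix.single a b (1:ℝ)) x = if x = a then 1 else 0 := by
  unfold rsum
  by_cases h : a = x
  · subst h; simp [Matrix.single]
  · simp [Matrix.single, h]
    exact (fun hh => h hh.symm)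

lemma csum_std (a b : Fin n) (x : Fin n) :
    csum (Matrix.single a b (1:ℝ)) x = if x = b then 1 else 0 := by
  unfold csum
  by_cases h : b = x
  · subst h; simp [Matrix.single]
  · simp [Matrix.single, h]
    exact (fun hh => h hh.symm)

/-- Reachability from irreducibility. -/
lemma reach_of_irred (R : Fin n → Fin n → Prop)
    (h : ∀ S : Set (Fin n), S.Nonempty → S ≠ Set.univ → ∃ i ∈ S, ∃ j ∉ S, R i j) :
    ∀ i j, Relation.ReflTransGen R i j := by
  intro i j
  by_contra hj
  set S : Set (Fin n) := {x | Relation.ReflTransGen R i x} with hS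
  have hne : S.Nonempty := ⟨i, Relation.ReflTransGen.refl⟩
  have hnu : S ≠ Set.univ := by
    intro h'
    apply hj
    have : j ∈ S := h' ▸ Set.mem_univ j
    exact this
  obtain ⟨a, ha, b, hb, hab⟩ := h S hne hnu
  exact hb (Relation.ReflTransGen.tail ha hab)

/-- Generic construction of a flow matrix along a walk. -/
lemma exists_flow (R : Fin n → Fin n → Prop)
    (Good : Matrix (Fin n) (Fin n) ℝ → Prop)
    (h0 : Good 0) (hadd : ∀ P Q, Good P → Good Q → Good (P + Q))
    (S : Fin n → Fin n → Matrix (Fin n) (Fin n) ℝ)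
    (hS : ∀ a b, R a b → Good (S a b))
    (hSbal : ∀ a b, R a b → ∀ x, rsum (S a b) x - csum (S a b) x =
      (if x = a then 1 else 0) - (if x = b then 1 else 0))
    {i j : Fin n} (h : Relation.ReflTransGen R i j) :
    ∃ P, Good P ∧ ∀ x, rsum P x - csum P x =
      (if x = i then 1 else 0) - (if x = j then 1 else 0) := by
  induction h with
  | refl => exact ⟨0, h0, by simp [rsum, csum]⟩
  | @tail b c hib hbc ih =>
    obtain ⟨P, hP, hPb⟩ := ih
    refine ⟨P + S b c, hadd _ _ hP (hS _ _ hbc), fun x => ?_⟩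
    rw [rsum_add, csum_add]
    have h1 := hPb x
    have h2 := hSbal b c hbc x
    ring_nf
    ring_nf at h1 h2
    linarith

/-- Maximum principle for balanced nonnegative irreducible matrices. -/
lemma max_principle (M : Matrix (Fin n) (Fin n) ℝ) (hM : ∀ a b, 0 ≤ M a b)
    (hconn : ∀ i j, Relation.ReflTransGen (fun a b => 0 < M a b) i j)
    (z : Fin n → ℝ) (hz : ∀ i, rsum M i * z i = ∑ jj, M i jj * z jj) :
    ∀ i j, z i = z j := by
  intro i j
  have hne : (Finset.univ : Finset (Fin n)).Nonempty := ⟨i, Finset.mem_univ i⟩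
  obtain ⟨i0, -, hmax⟩ := Finset.exists_max_image Finset.univ z hne
  have hmax' : ∀ a, z a ≤ z i0 := fun a => hmax a (Finset.mem_univ a)
  have hstep : ∀ a, z a = z i0 → ∀ b, 0 < M a b → z b = z i0 := by
    intro a ha b hab
    have hsum : ∑ jj, M a jj * (z i0 - z jj) = 0 := by
      have e1 : ∑ jj, M a jj * (z i0 - z jj)
          = (∑ jj, M a jj * z i0) - ∑ jj, M a jj * z jj := by
        rw [← Finset.sum_sub_distrib]
        exact Finset.sum_congr rfl fun jj _ => by ring
      rw [e1, ← Finset.sum_mul, ← hz a]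
      have : (∑ jj, M a jj) = rsum M a := rfl
      rw [this, ha, sub_self]
    have hterm := (Finset.sum_eq_zero_iff_of_nonneg
      (fun jj _ => mul_nonneg (hM a jj) (sub_nonneg.mpr (hmax' jj)))).mp hsum
    have := hterm b (Finset.mem_univ b)
    rcases mul_eq_zero.mp this with h | h
    · exact absurd h hab.ne'
    · linarith [sub_eq_zero.mp h]
  have hreach : ∀ x, z x = z i0 := by
    intro x
    have h := hconn i0 x
    induction h with
    | refl => rfl
    | @tail b c hb hbc ih => exact hstep b ih c hbc
  rw [hreach i, hreach j]

/-- If the principal minor is nonsingular and rows sum to zero, the kernel is spanned by ones. -/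
lemma ker_of_minor_det {m : ℕ} (L : Matrix (Fin (m+1)) (Fin (m+1)) ℝ)
    (hrow : ∀ i, ∑ j, L i j = 0)
    (hcol : ∀ j, ∑ i, L i j = 0)
    (hdet : (L.submatrix Fin.castSucc Fin.castSucc).det ≠ 0) :
    ∀ z, L.mulVec z = 0 → ∃ c : ℝ, z = c • (fun _ => (1:ℝ)) := by
  intro z hzk
  set w : Fin (m+1) → ℝ := fun x => z x - z (Fin.last m) with hw
  have hLw : L.mulVec w = 0 := by
    ext i
    have h1 : L.mulVec w i = L.mulVec z i - z (Fin.last m) * ∑ j, L i j := by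
      simp only [Matrix.mulVec, dotProduct, hw, Finset.mul_sum]
      rw [← Finset.sum_sub_distrib]
      exact Finset.sum_congr rfl fun jj _ => by ring
    rw [h1, hzk, hrow i]
    simp
  have hminor : (L.submatrix Fin.castSucc Fin.castSucc).mulVec (fun x => w x.castSucc) = 0 := by
    ext i
    have h2 : (L.mulVec w) i.castSucc = 0 := by rw [hLw]; rfl
    rw [Matrix.mulVec, dotProduct] at h2 ⊢
    rw [Fin.sum_univ_castSucc] at h2
    have hwl : w (Fin.last m) = 0 := by simp [hw]
    rw [hwl, mul_zero, add_zero] at h2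
    exact h2
  have hw0 : (fun x : Fin m => w x.castSucc) = 0 := by
    by_contra hne
    exact hdet ((Matrix.exists_mulVec_eq_zero_iff).mp ⟨_, hne, hminor⟩)
  refine ⟨z (Fin.last m), ?_⟩
  ext x
  induction x using Fin.lastCases with
  | last => simp
  | cast x =>
    have := congrFun hw0 x
    simp only [hw, Pi.zero_apply] at this
    simp only [Pi.smul_apply, smul_eq_mul, mul_one]
    linarith

/-- Conversely, if the kernel is spanned by ones the principal minor is nonsingular. -/
lemma minor_det_of_ker {m : ℕ} (L : Matrix (Fin (m+1)) (Fin (m+1)) ℝ)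
    (hcol : ∀ j, ∑ i, L i j = 0)
    (hker : ∀ z, L.mulVec z = 0 → ∃ c : ℝ, z = c • (fun _ => (1:ℝ))) :
    (L.submatrix Fin.castSucc Fin.castSucc).det ≠ 0 := by
  intro hdet
  obtain ⟨v, hv0, hvk⟩ := (Matrix.exists_mulVec_eq_zero_iff).mpr hdet
  set z : Fin (m+1) → ℝ := Fin.snoc v 0 with hz
  have hz1 : ∀ x : Fin m, z x.castSucc = v x := fun x => Fin.snoc_castSucc _ _ _
  have hz2 : z (Fin.last m) = 0 := Fin.snoc_last _ _
  have hcast : ∀ i : Fin m, L.mulVec z i.castSucc = 0 := by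
    intro i
    have := congrFun hvk i
    simp only [Matrix.mulVec, dotProduct, Matrix.submatrix_apply,
      Pi.zero_apply] at this
    rw [Matrix.mulVec, dotProduct, Fin.sum_univ_castSucc, hz2, mul_zero, add_zero]
    rw [← this]
    exact Finset.sum_congr rfl fun jj _ => by rw [hz1 jj]
  have hsumz : ∑ i, L.mulVec z i = 0 := by
    have hj : ∀ j, ∑ i, L i j * z j = 0 := fun j => by rw [← Finset.sum_mul, hcol j, zero_mul]
    simp only [Matrix.mulVec, dotProduct]
    rw [Finset.sum_comm]
    exact Finset.sum_eq_zero fun j _ => hj j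
  have hlast : L.mulVec z (Fin.last m) = 0 := by
    rw [Fin.sum_univ_castSucc] at hsumz
    have : ∑ i : Fin m, L.mulVec z i.castSucc = 0 :=
      Finset.sum_eq_zero fun i _ => hcast i
    linarith [hsumz, this]
  have hLz : L.mulVec z = 0 := by
    ext i
    induction i using Fin.lastCases with
    | last => exact hlast
    | cast i => exact hcast i
  obtain ⟨c, hc⟩ := hker z hLz
  have hc0 : c = 0 := by
    have := congrFun hc (Fin.last m)
    rw [hz2] at this
    simpa using this.symm
  apply hv0
  ext x
  have := congrFun hc x.castSucc
  rw [hz1 x, hc0] at this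
  simpa using this

/-- Existence of a small parameter keeping a determinant nonzero along a segment. -/
lemma exists_small_t {m : ℕ} (P Q : Matrix (Fin m) (Fin m) ℝ) (hQ : Q.det ≠ 0)
    (δ : ℝ) (hδ : 0 < δ) :
    ∃ t : ℝ, 0 < t ∧ t < δ ∧ (P + t • (Q - P)).det ≠ 0 := by
  classical
  set Mp : Matrix (Fin m) (Fin m) (Polynomial ℝ) :=
    P.map Polynomial.C + (Polynomial.X : Polynomial ℝ) • (Q - P).map Polynomial.C with hMp
  set ψ : Polynomial ℝ := Mp.det with hψ
  have heval : ∀ t : ℝ, ψ.eval t = (P + t • (Q - P)).det := by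
    intro t
    have h1 : ψ.eval t = ((Polynomial.evalRingHom t).mapMatrix Mp).det := by
      rw [hψ]
      exact RingHom.map_det (Polynomial.evalRingHom t) Mp
    rw [h1]
    congr 1
    ext i j
    simp [hMp, Matrix.map_apply, Matrix.add_apply, Matrix.smul_apply]
  have hψ0 : ψ ≠ 0 := by
    intro h
    have h1 := heval 1
    rw [h, Polynomial.eval_zero] at h1
    apply hQ
    have h2 : P + (1:ℝ) • (Q - P) = Q := by
      ext i j
      simp [Matrix.add_apply, Matrix.sub_apply]
    rw [← h2, ← h1]
  have hroots : {x : ℝ | ψ.IsRoot x}.Finite := Polynomial.finite_setOf_isRoot hψ0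
  have hIoo : (Set.Ioo (0:ℝ) δ).Infinite := Set.infinite_coe_iff.mp (Set.Ioo.infinite hδ)
  obtain ⟨t, ht⟩ := (hIoo.diff hroots).nonempty
  refine ⟨t, ht.1.1, ht.1.2, ?_⟩
  have : ¬ ψ.IsRoot t := ht.2
  rw [Polynomial.IsRoot, heval t] at this
  exact this
open Polynomial Matrix

variable {n : ℕ}

lemma pow_mulVec_eigen (B : Matrix (Fin n) (Fin n) ℝ) (u : Fin n → ℝ)
    (hu : B.mulVec u = u) : ∀ m : ℕ, (B ^ m).mulVec u = u := by
  intro m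
  induction m with
  | zero => simp [Matrix.one_mulVec]
  | succ m ih => rw [pow_succ', ← Matrix.mulVec_mulVec, ih, hu]

lemma aeval_mulVec_eigen (B : Matrix (Fin n) (Fin n) ℝ) (u : Fin n → ℝ)
    (hu : B.mulVec u = u) (f : Polynomial ℝ) :
    (Polynomial.aeval B f).mulVec u = f.eval 1 • u := by
  induction f using Polynomial.induction_on' with
  | add p q hp hq => rw [map_add, Matrix.add_mulVec, hp, hq, eval_add, add_smul]
  | monomial k a =>
    rw [aeval_monomial, eval_monomial, one_pow, mul_one]
    rw [← Matrix.mulVec_mulVec, pow_mulVec_eigen B u hu]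
    ext i
    simp [Matrix.mulVec, dotProduct, Matrix.algebraMap_matrix_apply,
      ite_mul, Finset.sum_ite_eq, mul_comm]

lemma ker_pow_mem (B : Matrix (Fin n) (Fin n) ℝ) (u v : Fin n → ℝ)
    (hker : ∀ x, B.mulVec x = x → ∃ c : ℝ, x = c • u)
    (hv : Bᵀ.mulVec v = v) (hpair : v ⬝ᵥ u ≠ 0) :
    ∀ (k : ℕ) (x : Fin n → ℝ), ((B - 1) ^ k).mulVec x = 0 → ∃ c : ℝ, x = c • u := by
  intro k
  induction k with
  | zero =>
    intro x hx
    refine ⟨0, ?_⟩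
    rw [pow_zero, Matrix.one_mulVec] at hx
    simp [hx]
  | succ k ih =>
    intro x hx
    rw [pow_succ, ← Matrix.mulVec_mulVec] at hx
    obtain ⟨c, hc⟩ := ih _ hx
    have hvB : B.vecMul v = v := by rw [← Matrix.mulVec_transpose]; exact hv
    have h1 : v ⬝ᵥ ((B - 1).mulVec x) = 0 := by
      rw [Matrix.sub_mulVec, dotProduct_sub, Matrix.dotProduct_mulVec, hvB,
        Matrix.one_mulVec, sub_self]
    rw [hc] at h1
    have hc0 : c = 0 := by
      rw [dotProduct_smul] at h1
      rcases mul_eq_zero.mp h1 with h | h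
      · exact h
      · exact absurd h hpair
    have : B.mulVec x = x := by
      have h2 : (B - 1).mulVec x = 0 := by rw [hc, hc0, zero_smul]
      rw [Matrix.sub_mulVec, Matrix.one_mulVec, sub_eq_zero] at h2
      exact h2
    exact hker x this

lemma algpos_criterion (hn : 0 < n) (B : Matrix (Fin n) (Fin n) ℝ) (u : Fin n → ℝ)
    (hu : ∀ i, 0 < u i)
    (hBu : B.mulVec u = u) (hBt : Bᵀ.mulVec (fun _ => (1:ℝ)) = (fun _ => (1:ℝ)))
    (hker : ∀ x, B.mulVec x = x → ∃ c : ℝ, x = c • u)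
    (hkerT : ∀ x, Bᵀ.mulVec x = x → ∃ c : ℝ, x = c • (fun _ => (1:ℝ))) :
    ∃ p : Polynomial ℝ, ∀ i j, 0 < (Polynomial.aeval B p) i j := by
  classical
  have hcp0 : B.charpoly ≠ 0 := B.charpoly_monic.ne_zero
  obtain ⟨g, hfac, hnd⟩ :=
    B.charpoly.exists_eq_pow_rootMultiplicity_mul_and_not_dvd hcp0 1
  set k := B.charpoly.rootMultiplicity 1 with hk
  set G := Polynomial.aeval B g with hG
  set N := B - 1 with hN
  have haevalN : Polynomial.aeval B ((X - C 1 : Polynomial ℝ)) = N := by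
    simp [hN, map_sub, Polynomial.aeval_X, Polynomial.aeval_C, Algebra.algebraMap_eq_smul_one]
  have hNkG : N ^ k * G = 0 := by
    have := B.aeval_self_charpoly
    rw [hfac, _root_.map_mul, map_pow, haevalN] at this
    exact this
  have hGNk : G * N ^ k = 0 := by
    have : Polynomial.aeval B (g * ((X - C 1 : Polynomial ℝ)) ^ k) = 0 := by
      rw [mul_comm, ← hfac]; exact B.aeval_self_charpoly
    rwa [_root_.map_mul, map_pow, haevalN] at this
  -- columns of G are multiples of u
  have hSu : (0:ℝ) < ∑ i, u i := Finset.sum_pos (fun i _ => hu i) ⟨⟨0, hn⟩, Finset.mem_univ _⟩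
  have hcol : ∀ j, ∃ c : ℝ, (fun i => G i j) = c • u := by
    intro j
    have h0 : (N ^ k).mulVec (fun i => G i j) = 0 := by
      have : (fun i => G i j) = G.mulVec (Pi.single j 1) := by
        ext i; rw [Matrix.mulVec_single]; simp
      rw [this, Matrix.mulVec_mulVec, hNkG, Matrix.zero_mulVec]
    exact ker_pow_mem B u (fun _ => (1:ℝ)) hker hBt (by
      simpa [dotProduct] using hSu.ne') k _ h0
  -- rows of G are multiples of ones
  have hrow : ∀ i, ∃ d : ℝ, (fun j => G i j) = d • (fun _ => (1:ℝ)) := by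
    intro i
    have hT : ((Bᵀ - 1) ^ k).mulVec (fun j => G i j) = 0 := by
      have h1 : (Bᵀ - 1) ^ k * Gᵀ = 0 := by
        have := congrArg Matrix.transpose hGNk
        rwa [Matrix.transpose_mul, Matrix.transpose_pow, Matrix.transpose_sub,
          Matrix.transpose_one, Matrix.transpose_zero] at this
      have : (fun j => G i j) = Gᵀ.mulVec (Pi.single i 1) := by
        ext j; rw [Matrix.mulVec_single]; simp [Matrix.transpose_apply]
      rw [this, Matrix.mulVec_mulVec, h1, Matrix.zero_mulVec]
    refine ker_pow_mem Bᵀ (fun _ => (1:ℝ)) u hkerT ?_ ?_ k _ hT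
    · rw [Matrix.transpose_transpose]; exact hBu
    · simpa [dotProduct] using hSu.ne'
  choose c hc using hcol
  choose d hd using hrow
  set i0 : Fin n := ⟨0, hn⟩
  set t := c i0 with ht
  have hGt : ∀ i j, G i j = t * u i := by
    intro i j
    have h1 : G i j = c j * u i := by
      have := congrFun (hc j) i; simpa using this
    have h2 : G i i0 = c i0 * u i := by
      have := congrFun (hc i0) i; simpa using this
    have h3 : G i j = d i := by
      have := congrFun (hd i) j; simpa using this
    have h4 : G i i0 = d i := by
      have := congrFun (hd i) i0; simpa using this
    rw [h1]
    have : c j * u i = c i0 * u i := by rw [← h1, ← h2, h3, h4]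
    rw [this]
  have hg1 : g.eval 1 ≠ 0 := fun h => hnd (Polynomial.dvd_iff_isRoot.mpr h)
  have htS : t * (∑ i, u i) = g.eval 1 := by
    have := congrFun (aeval_mulVec_eigen B u hBu g) i0
    rw [← hG] at this
    have hL : G.mulVec u i0 = t * u i0 * ∑ j, u j := by
      simp only [Matrix.mulVec, dotProduct]
      rw [Finset.mul_sum]
      exact Finset.sum_congr rfl fun j _ => by rw [hGt i0 j]; try ring
    rw [hL] at this
    have hRu : (g.eval 1 • u) i0 = g.eval 1 * u i0 := rfl
    rw [hRu] at this
    have := mul_right_cancel₀ (hu i0).ne' (by linarith [this] : t * (∑ j, u j) * u i0 = g.eval 1 * u i0)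
    exact this
  have ht0 : t ≠ 0 := by
    intro h; rw [h, zero_mul] at htS; exact hg1 htS.symm
  refine ⟨g * g, ?_⟩
  intro i j
  rw [_root_.map_mul, ← hG]
  have : (G * G) i j = t ^ 2 * u i * (∑ l, u l) := by
    rw [Matrix.mul_apply, Finset.mul_sum]
    exact Finset.sum_congr rfl fun l _ => by rw [hGt i l, hGt l j]; try ring
  rw [this]
  have h2 : 0 < t ^ 2 := by positivity
  exact mul_pos (mul_pos h2 (hu i)) hSu

-- ===== Part 3 : construction =====

lemma std_apply (i j a b : Fin n) :
    Matrix.single i j (1:ℝ) a b = if i = a ∧ j = b then 1 else 0 := rfl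

lemma rsum_neg (M : Matrix (Fin n) (Fin n) ℝ) (x : Fin n) : rsum (-M) x = - rsum M x := by
  simp [rsum]

lemma csum_neg (M : Matrix (Fin n) (Fin n) ℝ) (x : Fin n) : csum (-M) x = - csum M x := by
  simp [csum]

lemma rsum_smul (M : Matrix (Fin n) (Fin n) ℝ) (c : ℝ) (x : Fin n) :
    rsum (c • M) x = c * rsum M x := by
  simp [rsum, Finset.mul_sum]

lemma rsum_sub (M N : Matrix (Fin n) (Fin n) ℝ) (x : Fin n) :
    rsum (M - N) x = rsum M x - rsum N x := by
  simp [rsum, Finset.sum_sub_distrib]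

lemma csum_smul (M : Matrix (Fin n) (Fin n) ℝ) (c : ℝ) (x : Fin n) :
    csum (c • M) x = c * csum M x := by
  simp [csum, Finset.mul_sum]

lemma csum_sub (M N : Matrix (Fin n) (Fin n) ℝ) (x : Fin n) :
    csum (M - N) x = csum M x - csum N x := by
  simp [csum, Finset.sum_sub_distrib]

lemma rsum_sum {ι : Type*} (s : Finset ι) (F : ι → Matrix (Fin n) (Fin n) ℝ) (x : Fin n) :
    rsum (∑ p ∈ s, F p) x = ∑ p ∈ s, rsum (F p) x := by
  simp [rsum, Matrix.sum_apply]
  rw [Finset.sum_comm]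

lemma csum_sum {ι : Type*} (s : Finset ι) (F : ι → Matrix (Fin n) (Fin n) ℝ) (x : Fin n) :
    csum (∑ p ∈ s, F p) x = ∑ p ∈ s, csum (F p) x := by
  simp [csum, Matrix.sum_apply]
  rw [Finset.sum_comm]

lemma abs_entry_le (x : Matrix (Fin n) (Fin n) ℝ) (a b : Fin n) :
    |x a b| ≤ ∑ i, ∑ j, |x i j| := by
  have h1 : |x a b| ≤ ∑ j, |x a j| :=
    Finset.single_le_sum (fun j _ => abs_nonneg (x a j)) (Finset.mem_univ b)
  have h2 : (∑ j, |x a j|) ≤ ∑ i, ∑ j, |x i j| :=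
    Finset.single_le_sum (f := fun i => ∑ j, |x i j|)
      (fun i _ => Finset.sum_nonneg fun j _ => abs_nonneg _) (Finset.mem_univ a)
  linarith

/-- Balanced Laplacian-type matrix of `M`. -/
def lap (M : Matrix (Fin n) (Fin n) ℝ) : Matrix (Fin n) (Fin n) ℝ :=
  Matrix.of fun i j => (if i = j then rsum M i else 0) - M i j

lemma lap_apply (M : Matrix (Fin n) (Fin n) ℝ) (i j : Fin n) :
    lap M i j = (if i = j then rsum M i else 0) - M i j := rfl

lemma lap_row (M : Matrix (Fin n) (Fin n) ℝ) (i : Fin n) : ∑ j, lap M i j = 0 := by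
  simp only [lap_apply]
  rw [Finset.sum_sub_distrib, Finset.sum_ite_eq]
  simp [rsum]

lemma lap_col (M : Matrix (Fin n) (Fin n) ℝ) (hbal : ∀ x, rsum M x = csum M x) (j : Fin n) :
    ∑ i, lap M i j = 0 := by
  simp only [lap_apply]
  rw [Finset.sum_sub_distrib]
  have : (∑ i, if i = j then rsum M i else 0) = rsum M j := by
    rw [Finset.sum_ite_eq']; simp
  rw [this, hbal j]
  simp [csum]

lemma lap_mulVec (M : Matrix (Fin n) (Fin n) ℝ) (z : Fin n → ℝ) (i : Fin n) :
    (lap M).mulVec z i = rsum M i * z i - ∑ j, M i j * z j := by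
  simp only [Matrix.mulVec, dotProduct, lap_apply, sub_mul]
  rw [Finset.sum_sub_distrib]
  congr 1
  simp [ite_mul, Finset.sum_ite_eq]

lemma lap_transpose_mulVec (M : Matrix (Fin n) (Fin n) ℝ) (z : Fin n → ℝ) (j : Fin n) :
    (lap M)ᵀ.mulVec z j = rsum M j * z j - ∑ i, M i j * z i := by
  simp only [Matrix.mulVec, dotProduct, Matrix.transpose_apply, lap_apply, sub_mul]
  rw [Finset.sum_sub_distrib]
  congr 1
  simp [ite_mul, Finset.sum_ite_eq']

-- ===== the construction =====

lemma construct {n : ℕ} (A : Matrix (Fin n) (Fin n) SignType)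
    (hirr : SPIrred A) (hrowpos : ∀ i, ∃ j, A i j = SignType.pos)
    (hBA : SPIrred (BA A))
    (hcomp : ∀ i j, ¬ SameComp A i j → A i j ≠ SignType.pos)
    (m : ℕ) (hnm : n = m + 1) :
    ∃ M : Matrix (Fin n) (Fin n) ℝ,
      (∀ i j, A i j = SignType.pos → 0 < M i j) ∧
      (∀ i j, A i j = SignType.neg → M i j < 0) ∧
      (∀ i j, A i j = 0 → M i j = 0) ∧
      (∀ x, rsum M x = csum M x) ∧
      (∀ x, 0 < rsum M x) ∧
      (∀ z, (lap M).mulVec z = 0 → ∃ c : ℝ, z = c • fun _ => (1:ℝ)) ∧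
      (∀ z, (lap M)ᵀ.mulVec z = 0 → ∃ c : ℝ, z = c • fun _ => (1:ℝ)) := by
  classical
  subst hnm
  have hreachA : ∀ i j, Relation.ReflTransGen (fun a b => A a b ≠ 0) i j :=
    reach_of_irred _ hirr
  have hreachH : ∀ i j, Relation.ReflTransGen
      (fun a b => A a b = SignType.pos ∨ A b a = SignType.neg) i j := by
    apply reach_of_irred
    intro S h1 h2
    obtain ⟨i, hi, j, hj, hij⟩ := hBA S h1 h2
    refine ⟨i, hi, j, hj, ?_⟩
    by_contra hc
    exact hij (if_neg hc)
  have hreachP : ∀ i j, A i j = SignType.pos →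
      Relation.ReflTransGen (fun a b => A a b = SignType.pos) j i := by
    intro i j hij
    by_cases hs : SameComp A i j
    · exact hs.2
    · exact absurd hij (hcomp i j hs)
  -- building blocks
  have exists_Cpos : ∀ i j, A i j = SignType.pos →
      ∃ P : Matrix (Fin (m+1)) (Fin (m+1)) ℝ,
        (∀ a b, 0 ≤ P a b) ∧ (∀ a b, A a b ≠ SignType.pos → P a b = 0) ∧
        (∀ x, rsum P x = csum P x) ∧ 1 ≤ P i j := by
    intro i j hij
    obtain ⟨Φ, hΦg, hΦb⟩ := exists_flow (fun a b => A a b = SignType.pos)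
      (fun P => (∀ a b, 0 ≤ P a b) ∧ (∀ a b, A a b ≠ SignType.pos → P a b = 0))
      ⟨fun a b => le_refl 0, fun a b _ => rfl⟩
      (fun P Q hP hQ => ⟨fun a b => add_nonneg (hP.1 a b) (hQ.1 a b),
        fun a b h => by simp [Matrix.add_apply, hP.2 a b h, hQ.2 a b h]⟩)
      (fun a b => Matrix.single a b 1)
      (fun a b hab => ⟨fun a' b' => by rw [std_apply]; split <;> norm_num,
        fun a' b' h => by rw [std_apply, if_neg]; rintro ⟨rfl, rfl⟩; exact h hab⟩)
      (fun a b _ x => by rw [rsum_std, csum_std])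
      (hreachP i j hij)
    refine ⟨Matrix.single i j 1 + Φ, ?_, ?_, ?_, ?_⟩
    · intro a b
      have := hΦg.1 a b
      rw [Matrix.add_apply, std_apply]
      split <;> linarith
    · intro a b h
      rw [Matrix.add_apply, hΦg.2 a b h, std_apply, if_neg, add_zero]
      rintro ⟨rfl, rfl⟩; exact h hij
    · intro x
      have h1 := hΦb x
      have h2 : rsum (Matrix.single i j 1 + Φ) x
          = (if x = i then 1 else 0) + rsum Φ x := by rw [rsum_add, rsum_std]
      have h3 : csum (Matrix.single i j 1 + Φ) x
          = (if x = j then 1 else 0) + csum Φ x := by rw [csum_add, csum_std]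
      rw [h2, h3]; split_ifs at h1 ⊢ <;> linarith
    · rw [Matrix.add_apply, std_apply, if_pos ⟨rfl, rfl⟩]
      linarith [hΦg.1 i j]
  have exists_Cnz : ∀ i j, A i j ≠ 0 →
      ∃ P : Matrix (Fin (m+1)) (Fin (m+1)) ℝ,
        (∀ a b, 0 ≤ P a b) ∧ (∀ a b, A a b = 0 → P a b = 0) ∧
        (∀ x, rsum P x = csum P x) ∧ 1 ≤ P i j := by
    intro i j hij
    obtain ⟨Φ, hΦg, hΦb⟩ := exists_flow (fun a b => A a b ≠ 0)
      (fun P => (∀ a b, 0 ≤ P a b) ∧ (∀ a b, A a b = 0 → P a b = 0))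
      ⟨fun a b => le_refl 0, fun a b _ => rfl⟩
      (fun P Q hP hQ => ⟨fun a b => add_nonneg (hP.1 a b) (hQ.1 a b),
        fun a b h => by simp [Matrix.add_apply, hP.2 a b h, hQ.2 a b h]⟩)
      (fun a b => Matrix.single a b 1)
      (fun a b hab => ⟨fun a' b' => by rw [std_apply]; split <;> norm_num,
        fun a' b' h => by
          rw [std_apply, if_neg]
          rintro ⟨rfl, rfl⟩
          exact hab (by rw [h])⟩)
      (fun a b _ x => by rw [rsum_std, csum_std])
      (hreachA j i)
    refine ⟨Matrix.single i j 1 + Φ, ?_, ?_, ?_, ?_⟩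
    · intro a b
      have := hΦg.1 a b
      rw [Matrix.add_apply, std_apply]
      split <;> linarith
    · intro a b h
      rw [Matrix.add_apply, hΦg.2 a b h, std_apply, if_neg, add_zero]
      rintro ⟨rfl, rfl⟩; exact hij h
    · intro x
      have h1 := hΦb x
      have h2 : rsum (Matrix.single i j 1 + Φ) x
          = (if x = i then 1 else 0) + rsum Φ x := by rw [rsum_add, rsum_std]
      have h3 : csum (Matrix.single i j 1 + Φ) x
          = (if x = j then 1 else 0) + csum Φ x := by rw [csum_add, csum_std]
      rw [h2, h3]; split_ifs at h1 ⊢ <;> linarith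
    · rw [Matrix.add_apply, std_apply, if_pos ⟨rfl, rfl⟩]
      linarith [hΦg.1 i j]
  have exists_Cneg : ∀ i j, A i j = SignType.neg →
      ∃ P : Matrix (Fin (m+1)) (Fin (m+1)) ℝ,
        ((∀ a b, A a b = 0 → P a b = 0) ∧ (∀ a b, A a b = SignType.pos → 0 ≤ P a b) ∧
          (∀ a b, A a b = SignType.neg → P a b ≤ 0)) ∧
        (∀ x, rsum P x = csum P x) ∧ P i j ≤ -1 := by
    intro i j hij
    obtain ⟨Φ, hΦg, hΦb⟩ := exists_flow
      (fun a b => A a b = SignType.pos ∨ A b a = SignType.neg)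
      (fun P => (∀ a b, A a b = 0 → P a b = 0) ∧ (∀ a b, A a b = SignType.pos → 0 ≤ P a b) ∧
        (∀ a b, A a b = SignType.neg → P a b ≤ 0))
      ⟨fun a b _ => rfl, fun a b _ => le_refl 0, fun a b _ => le_refl 0⟩
      (fun P Q hP hQ => ⟨fun a b h => by simp [Matrix.add_apply, hP.1 a b h, hQ.1 a b h],
        fun a b h => by
          have := hP.2.1 a b h; have := hQ.2.1 a b h
          rw [Matrix.add_apply]; linarith,
        fun a b h => by
          have := hP.2.2 a b h; have := hQ.2.2 a b h
          rw [Matrix.add_apply]; linarith⟩)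
      (fun a b => if A a b = SignType.pos then Matrix.single a b 1
        else -(Matrix.single b a 1))
      (fun a b hab => by
        by_cases h : A a b = SignType.pos
        · rw [if_pos h]
          refine ⟨fun a' b' h0 => ?_, fun a' b' _ => by rw [std_apply]; split <;> norm_num,
            fun a' b' hn => ?_⟩
          · rw [std_apply, if_neg]; rintro ⟨rfl, rfl⟩; rw [h] at h0; exact absurd h0 (by decide)
          · rw [std_apply, if_neg]; rintro ⟨rfl, rfl⟩; rw [h] at hn; exact absurd hn (by decide)
        · have hba : A b a = SignType.neg := hab.resolve_left h
          rw [if_neg h]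
          refine ⟨fun a' b' h0 => ?_, fun a' b' hp => ?_, fun a' b' _ => ?_⟩
          · rw [Matrix.neg_apply, std_apply, neg_eq_zero, if_neg]
            rintro ⟨rfl, rfl⟩; rw [hba] at h0; exact absurd h0 (by decide)
          · rw [Matrix.neg_apply, std_apply, if_neg]
            · norm_num
            · rintro ⟨rfl, rfl⟩; rw [hba] at hp; exact absurd hp (by decide)
          · rw [Matrix.neg_apply, std_apply]
            split <;> norm_num)
      (fun a b hab x => by
        by_cases h : A a b = SignType.pos
        · rw [if_pos h, rsum_std, csum_std]
        · rw [if_neg h, rsum_neg, csum_neg, rsum_std, csum_std]; ring)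
      (hreachH i j)
    refine ⟨(-(Matrix.single i j 1)) + Φ, ?_, ?_, ?_⟩
    · refine ⟨fun a b h0 => ?_, fun a b hp => ?_, fun a b hn => ?_⟩
      · rw [Matrix.add_apply, hΦg.1 a b h0, Matrix.neg_apply, std_apply, add_zero, neg_eq_zero,
          if_neg]
        rintro ⟨rfl, rfl⟩; rw [hij] at h0; exact absurd h0 (by decide)
      · have := hΦg.2.1 a b hp
        rw [Matrix.add_apply, Matrix.neg_apply, std_apply, if_neg]
        · linarith
        · rintro ⟨rfl, rfl⟩; rw [hij] at hp; exact absurd hp (by decide)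
      · have := hΦg.2.2 a b hn
        rw [Matrix.add_apply, Matrix.neg_apply, std_apply]
        split <;> linarith
    · intro x
      have h1 := hΦb x
      have h2 : rsum (-(Matrix.single i j 1) + Φ) x
          = -(if x = i then 1 else 0) + rsum Φ x := by rw [rsum_add, rsum_neg, rsum_std]
      have h3 : csum (-(Matrix.single i j 1) + Φ) x
          = -(if x = j then 1 else 0) + csum Φ x := by rw [csum_add, csum_neg, csum_std]
      rw [h2, h3]; split_ifs at h1 ⊢ <;> linarith
    · have := hΦg.2.2 i j hij
      rw [Matrix.add_apply, Matrix.neg_apply, std_apply, if_pos ⟨rfl, rfl⟩]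
      linarith
  -- now sum the blocks
  choose CP hCP using exists_Cpos
  choose CN hCN using exists_Cneg
  choose CZ hCZ using exists_Cnz
  set Ppos : Matrix (Fin (m+1)) (Fin (m+1)) ℝ := ∑ p : Fin (m+1) × Fin (m+1),
    if h : A p.1 p.2 = SignType.pos then CP p.1 p.2 h else 0 with hPposdef
  set Pneg : Matrix (Fin (m+1)) (Fin (m+1)) ℝ := ∑ p : Fin (m+1) × Fin (m+1),
    if h : A p.1 p.2 = SignType.neg then CN p.1 p.2 h else 0 with hPnegdef
  set Mstar : Matrix (Fin (m+1)) (Fin (m+1)) ℝ := ∑ p : Fin (m+1) × Fin (m+1),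
    if h : A p.1 p.2 ≠ 0 then CZ p.1 p.2 h else 0 with hMstardef
  have p1 : ∀ a b, 0 ≤ Ppos a b := by
    intro a b
    rw [hPposdef, Matrix.sum_apply]
    refine Finset.sum_nonneg fun p _ => ?_
    by_cases h : A p.1 p.2 = SignType.pos
    · rw [dif_pos h]; exact (hCP p.1 p.2 h).1 a b
    · rw [dif_neg h]; simp
  have p2 : ∀ a b, A a b ≠ SignType.pos → Ppos a b = 0 := by
    intro a b hab
    rw [hPposdef, Matrix.sum_apply]
    refine Finset.sum_eq_zero fun p _ => ?_
    by_cases h : A p.1 p.2 = SignType.pos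
    · rw [dif_pos h]; exact (hCP p.1 p.2 h).2.1 a b hab
    · rw [dif_neg h]; simp
  have p3 : ∀ x, rsum Ppos x = csum Ppos x := by
    intro x
    rw [hPposdef, rsum_sum, csum_sum]
    refine Finset.sum_congr rfl fun p _ => ?_
    by_cases h : A p.1 p.2 = SignType.pos
    · rw [dif_pos h]; exact (hCP p.1 p.2 h).2.2.1 x
    · rw [dif_neg h]; simp [rsum, csum]
  have p4 : ∀ i j, A i j = SignType.pos → 1 ≤ Ppos i j := by
    intro i j hij
    have h1 : (1:ℝ) ≤ (if h : A ((i,j) : Fin (m+1) × Fin (m+1)).1 (i,j).2 = SignType.pos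
        then CP (i,j).1 (i,j).2 h else 0) i j := by
      rw [dif_pos hij]; exact (hCP i j hij).2.2.2
    have h2 := Finset.single_le_sum
      (f := fun p : Fin (m+1) × Fin (m+1) =>
        (if h : A p.1 p.2 = SignType.pos then CP p.1 p.2 h else 0) i j)
      (fun p _ => by
        by_cases h : A p.1 p.2 = SignType.pos
        · rw [dif_pos h]; exact (hCP p.1 p.2 h).1 i j
        · rw [dif_neg h]; simp)
      (Finset.mem_univ ((i,j) : Fin (m+1) × Fin (m+1)))
    rw [hPposdef, Matrix.sum_apply]
    exact le_trans h1 h2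
  have p5 : ∀ x, 1 ≤ rsum Ppos x := by
    intro x
    obtain ⟨j, hj⟩ := hrowpos x
    have h1 : Ppos x j ≤ rsum Ppos x :=
      Finset.single_le_sum (f := fun j' => Ppos x j') (fun j' _ => p1 x j')
        (Finset.mem_univ j)
    linarith [p4 x j hj]
  have n1 : ∀ a b, A a b = 0 → Pneg a b = 0 := by
    intro a b hab
    rw [hPnegdef, Matrix.sum_apply]
    refine Finset.sum_eq_zero fun p _ => ?_
    by_cases h : A p.1 p.2 = SignType.neg
    · rw [dif_pos h]; exact (hCN p.1 p.2 h).1.1 a b hab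
    · rw [dif_neg h]; simp
  have n2 : ∀ a b, A a b = SignType.pos → 0 ≤ Pneg a b := by
    intro a b hab
    rw [hPnegdef, Matrix.sum_apply]
    refine Finset.sum_nonneg fun p _ => ?_
    by_cases h : A p.1 p.2 = SignType.neg
    · rw [dif_pos h]; exact (hCN p.1 p.2 h).1.2.1 a b hab
    · rw [dif_neg h]; simp
  have n3 : ∀ a b, A a b = SignType.neg → Pneg a b ≤ 0 := by
    intro a b hab
    rw [hPnegdef, Matrix.sum_apply]
    refine Finset.sum_nonpos fun p _ => ?_
    by_cases h : A p.1 p.2 = SignType.neg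
    · rw [dif_pos h]; exact (hCN p.1 p.2 h).1.2.2 a b hab
    · rw [dif_neg h]; simp
  have n4 : ∀ x, rsum Pneg x = csum Pneg x := by
    intro x
    rw [hPnegdef, rsum_sum, csum_sum]
    refine Finset.sum_congr rfl fun p _ => ?_
    by_cases h : A p.1 p.2 = SignType.neg
    · rw [dif_pos h]; exact (hCN p.1 p.2 h).2.1 x
    · rw [dif_neg h]; simp [rsum, csum]
  have n5 : ∀ i j, A i j = SignType.neg → Pneg i j ≤ -1 := by
    intro i j hij
    rw [hPnegdef, Matrix.sum_apply]
    rw [← Finset.add_sum_erase _ _ (Finset.mem_univ ((i,j) : Fin (m+1) × Fin (m+1)))]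
    have h1 : (if h : A ((i,j) : Fin (m+1) × Fin (m+1)).1 (i,j).2 = SignType.neg
        then CN (i,j).1 (i,j).2 h else 0) i j ≤ -1 := by
      rw [dif_pos hij]; exact (hCN i j hij).2.2
    have h2 : ∑ p ∈ Finset.univ.erase ((i,j) : Fin (m+1) × Fin (m+1)),
        (if h : A p.1 p.2 = SignType.neg then CN p.1 p.2 h else 0) i j ≤ 0 := by
      refine Finset.sum_nonpos fun p _ => ?_
      by_cases h : A p.1 p.2 = SignType.neg
      · rw [dif_pos h]; exact (hCN p.1 p.2 h).1.2.2 i j hij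
      · rw [dif_neg h]; simp
    linarith
  have z1 : ∀ a b, 0 ≤ Mstar a b := by
    intro a b
    rw [hMstardef, Matrix.sum_apply]
    refine Finset.sum_nonneg fun p _ => ?_
    by_cases h : A p.1 p.2 ≠ 0
    · rw [dif_pos h]; exact (hCZ p.1 p.2 h).1 a b
    · rw [dif_neg h]; simp
  have z2 : ∀ a b, A a b = 0 → Mstar a b = 0 := by
    intro a b hab
    rw [hMstardef, Matrix.sum_apply]
    refine Finset.sum_eq_zero fun p _ => ?_
    by_cases h : A p.1 p.2 ≠ 0
    · rw [dif_pos h]; exact (hCZ p.1 p.2 h).2.1 a b hab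
    · rw [dif_neg h]; simp
  have z3 : ∀ x, rsum Mstar x = csum Mstar x := by
    intro x
    rw [hMstardef, rsum_sum, csum_sum]
    refine Finset.sum_congr rfl fun p _ => ?_
    by_cases h : A p.1 p.2 ≠ 0
    · rw [dif_pos h]; exact (hCZ p.1 p.2 h).2.2.1 x
    · rw [dif_neg h]; simp [rsum, csum]
  have z4 : ∀ i j, A i j ≠ 0 → 1 ≤ Mstar i j := by
    intro i j hij
    have h1 : (1:ℝ) ≤ (if h : A ((i,j) : Fin (m+1) × Fin (m+1)).1 (i,j).2 ≠ 0
        then CZ (i,j).1 (i,j).2 h else 0) i j := by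
      rw [dif_pos hij]; exact (hCZ i j hij).2.2.2
    have h2 := Finset.single_le_sum
      (f := fun p : Fin (m+1) × Fin (m+1) =>
        (if h : A p.1 p.2 ≠ 0 then CZ p.1 p.2 h else 0) i j)
      (fun p _ => by
        by_cases h : A p.1 p.2 ≠ 0
        · rw [dif_pos h]; exact (hCZ p.1 p.2 h).1 i j
        · rw [dif_neg h]; simp)
      (Finset.mem_univ ((i,j) : Fin (m+1) × Fin (m+1)))
    rw [hMstardef, Matrix.sum_apply]
    exact le_trans h1 h2
  have z6 : ∀ i j, Relation.ReflTransGen (fun a b => 0 < Mstar a b) i j := by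
    intro i j
    refine Relation.ReflTransGen.mono ?_ i j (hreachA i j)
    intro a b hab
    exact lt_of_lt_of_le one_pos (z4 a b hab)
  -- the strictly signed base matrix M0
  set T : ℝ := 1 + ∑ x, |rsum Pneg x| with hTdef
  have hT1 : 1 ≤ T := by
    rw [hTdef]
    have : 0 ≤ ∑ x, |rsum Pneg x| := Finset.sum_nonneg fun x _ => abs_nonneg _
    linarith
  have hTabs : ∀ x, |rsum Pneg x| ≤ T - 1 := by
    intro x
    rw [hTdef]
    have := Finset.single_le_sum (f := fun x => |rsum Pneg x|)
      (fun x _ => abs_nonneg _) (Finset.mem_univ x)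
    linarith
  set M0 : Matrix (Fin (m+1)) (Fin (m+1)) ℝ := T • Ppos + Pneg with hM0def
  have hM0apply : ∀ a b, M0 a b = T * Ppos a b + Pneg a b := by
    intro a b
    rw [hM0def, Matrix.add_apply, Matrix.smul_apply, smul_eq_mul]
  have m0pos : ∀ i j, A i j = SignType.pos → 1 ≤ M0 i j := by
    intro i j h
    rw [hM0apply]
    have h1 := p4 i j h
    have h2 := n2 i j h
    nlinarith
  have m0neg : ∀ i j, A i j = SignType.neg → M0 i j ≤ -1 := by
    intro i j h
    rw [hM0apply, p2 i j (by rw [h]; decide), mul_zero, zero_add]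
    exact n5 i j h
  have m0zero : ∀ i j, A i j = 0 → M0 i j = 0 := by
    intro i j h
    rw [hM0apply, p2 i j (by rw [h]; decide), n1 i j h, mul_zero, zero_add]
  have m0bal : ∀ x, rsum M0 x = csum M0 x := by
    intro x
    rw [hM0def, rsum_add, csum_add, rsum_smul, csum_smul, p3, n4]
  have m0row : ∀ x, 1 ≤ rsum M0 x := by
    intro x
    rw [hM0def, rsum_add, rsum_smul]
    have h1 := p5 x
    have h2 := hTabs x
    have h3 := neg_abs_le (rsum Pneg x)
    nlinarith
  -- kernel of the reference Laplacian
  have hkerstar : ∀ z, (lap Mstar).mulVec z = 0 → ∃ c : ℝ, z = c • fun _ => (1:ℝ) := by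
    intro z hz
    have hmp := max_principle Mstar z1 z6 z (fun i => by
      have := congrFun hz i
      rw [lap_mulVec] at this
      have h0 : (0 : Fin (m+1) → ℝ) i = 0 := rfl
      rw [h0] at this
      linarith)
    exact ⟨z 0, funext fun x => by
      have := hmp x 0
      simp [this]⟩
  have hdetstar := minor_det_of_ker (lap Mstar) (lap_col Mstar z3) hkerstar
  -- perturbation
  set D : Matrix (Fin (m+1)) (Fin (m+1)) ℝ := Mstar - M0 with hDdef
  set Kb : ℝ := 1 + ∑ i, ∑ j, |D i j| with hKbdef
  have hKb1 : 1 ≤ Kb := by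
    rw [hKbdef]
    have : 0 ≤ ∑ i, ∑ j, |D i j| :=
      Finset.sum_nonneg fun i _ => Finset.sum_nonneg fun j _ => abs_nonneg _
    linarith
  have hKb0 : 0 < Kb := by linarith
  have hKbe : ∀ a b, |D a b| ≤ Kb - 1 := by
    intro a b
    have := abs_entry_le D a b
    rw [hKbdef]; linarith
  have hKbr : ∀ x, |rsum D x| ≤ Kb - 1 := by
    intro x
    have h1 : |rsum D x| ≤ ∑ j, |D x j| := Finset.abs_sum_le_sum_abs _ _
    have h2 : (∑ j, |D x j|) ≤ ∑ i, ∑ j, |D i j| :=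
      Finset.single_le_sum (f := fun i => ∑ j, |D i j|)
        (fun i _ => Finset.sum_nonneg fun j _ => abs_nonneg _) (Finset.mem_univ x)
    rw [hKbdef]; linarith
  obtain ⟨t, ht0, htδ, hdet⟩ := exists_small_t
    ((lap M0).submatrix Fin.castSucc Fin.castSucc)
    ((lap Mstar).submatrix Fin.castSucc Fin.castSucc) hdetstar (1/Kb) (by positivity)
  have htKb : t * Kb < 1 := by
    rw [div_eq_mul_inv, one_mul] at htδ
    calc t * Kb < Kb⁻¹ * Kb := by
          exact mul_lt_mul_of_pos_right htδ hKb0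
    _ = 1 := inv_mul_cancel₀ hKb0.ne'
  set M : Matrix (Fin (m+1)) (Fin (m+1)) ℝ := M0 + t • D with hMdef
  have hMapply : ∀ a b, M a b = M0 a b + t * D a b := by
    intro a b
    rw [hMdef, Matrix.add_apply, Matrix.smul_apply, smul_eq_mul]
  have habs : ∀ a b, |t * D a b| < 1 := by
    intro a b
    rw [abs_mul, abs_of_pos ht0]
    calc t * |D a b| ≤ t * (Kb - 1) := by
          exact mul_le_mul_of_nonneg_left (hKbe a b) ht0.le
    _ < 1 := by nlinarith
  have hpos : ∀ i j, A i j = SignType.pos → 0 < M i j := by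
    intro i j h
    rw [hMapply]
    have h1 := m0pos i j h
    have h2 := (abs_lt.mp (habs i j)).1
    linarith
  have hneg : ∀ i j, A i j = SignType.neg → M i j < 0 := by
    intro i j h
    rw [hMapply]
    have h1 := m0neg i j h
    have h2 := (abs_lt.mp (habs i j)).2
    linarith
  have hzero : ∀ i j, A i j = 0 → M i j = 0 := by
    intro i j h
    rw [hMapply, m0zero i j h, hDdef, Matrix.sub_apply, z2 i j h, m0zero i j h]
    ring
  have hbal : ∀ x, rsum M x = csum M x := by
    intro x
    rw [hMdef, rsum_add, csum_add, rsum_smul, csum_smul, m0bal, hDdef, rsum_sub, csum_sub,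
      z3, m0bal]
  have hrowM : ∀ x, 0 < rsum M x := by
    intro x
    rw [hMdef, rsum_add, rsum_smul]
    have h1 := m0row x
    have h2 := hKbr x
    have h3 := (abs_le.mp h2).1
    have h4 : t * rsum D x ≥ -(t * (Kb - 1)) := by nlinarith
    nlinarith
  -- determinant of the perturbed minor
  have hlapaff : lap M = lap M0 + t • (lap Mstar - lap M0) := by
    ext i j
    have hr : rsum M i = rsum M0 i + t * rsum D i := by
      rw [hMdef, rsum_add, rsum_smul]
    simp only [lap_apply, Matrix.add_apply, Matrix.smul_apply, Matrix.sub_apply, smul_eq_mul,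
      hr, hMapply i j]
    have hD : D i j = Mstar i j - M0 i j := by rw [hDdef, Matrix.sub_apply]
    have hrD : rsum D i = rsum Mstar i - rsum M0 i := by rw [hDdef, rsum_sub]
    rw [hD, hrD]
    split_ifs <;> ring
  have hdetM : ((lap M).submatrix Fin.castSucc Fin.castSucc).det ≠ 0 := by
    have hsub : (lap M).submatrix Fin.castSucc Fin.castSucc =
        (lap M0).submatrix Fin.castSucc Fin.castSucc +
          t • ((lap Mstar).submatrix Fin.castSucc Fin.castSucc -
            (lap M0).submatrix Fin.castSucc Fin.castSucc) := by
      rw [hlapaff]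
      ext i j
      simp [Matrix.submatrix_apply, Matrix.add_apply, Matrix.smul_apply, Matrix.sub_apply]
    rw [hsub]
    exact hdet
  refine ⟨M, hpos, hneg, hzero, hbal, fun x => hrowM x, ?_, ?_⟩
  · exact ker_of_minor_det (lap M) (lap_row M) (lap_col M hbal) hdetM
  · refine ker_of_minor_det ((lap M)ᵀ) ?_ ?_ ?_
    · intro i
      have := lap_col M hbal i
      simpa [Matrix.transpose_apply] using this
    · intro j
      have := lap_row M j
      simpa [Matrix.transpose_apply] using this
    · have hts : (lap M)ᵀ.submatrix Fin.castSucc Fin.castSucc =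
          ((lap M).submatrix Fin.castSucc Fin.castSucc)ᵀ := by
        ext i j
        simp [Matrix.submatrix_apply, Matrix.transpose_apply]
      rw [hts, Matrix.det_transpose]
      exact hdetM

/-- Theorem 3.16: an AP-irreducible sign pattern matrix such that `A[α,β]` contains
no `+` for any two distinct irreducible components `α, β` of `A₊` (equivalently:
every `+` entry joins two indices of the same irreducible component) allows
algebraic positivity. -/
theorem stmt17 {n : ℕ} (A : Matrix (Fin n) (Fin n) SignType)
    (hAP : APIrred A)
    (hcomp : ∀ i j, ¬ SameComp A i j → A i j ≠ SignType.pos) :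
    ∃ B : Matrix (Fin n) (Fin n) ℝ,
      (∀ i j, SignType.sign (B i j) = A i j) ∧ AlgPos B := by
  classical
  obtain ⟨hirr, hrowpos, hcolpos, hBA⟩ := hAP
  rcases Nat.eq_zero_or_pos n with hn | hn
  · subst hn
    exact ⟨0, fun i => i.elim0, ⟨1, fun i => i.elim0⟩⟩
  obtain ⟨m, rfl⟩ : ∃ m, n = m + 1 := ⟨n - 1, (Nat.succ_pred_eq_of_pos hn).symm⟩
  obtain ⟨M, hMp, hMn, hMz, hMbal, hMπ, hker, hkerT⟩ :=
    construct A hirr hrowpos hBA hcomp m rfl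
  set B : Matrix (Fin (m+1)) (Fin (m+1)) ℝ :=
    Matrix.of fun i j => M i j / rsum M j with hBdef
  have hBapply : ∀ i j, B i j = M i j / rsum M j := fun i j => rfl
  refine ⟨B, ?_, ?_⟩
  · intro i j
    rcases ha : A i j with _ | _ | _
    · rw [hBapply, hMz i j ha, zero_div]
      exact sign_zero
    · rw [hBapply]
      have h1 : M i j / rsum M j < 0 := div_neg_of_neg_of_pos (hMn i j ha) (hMπ j)
      rw [sign_neg h1]
      rfl
    · rw [hBapply]
      have h1 : 0 < M i j / rsum M j := div_pos (hMp i j ha) (hMπ j)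
      rw [sign_pos h1]
      rfl
  · have hBu : B.mulVec (fun i => rsum M i) = fun i => rsum M i := by
      ext i
      simp only [Matrix.mulVec, dotProduct, hBapply]
      rw [Finset.sum_congr rfl fun j _ => div_mul_cancel₀ (M i j) (hMπ j).ne']
      rfl
    have hBt : Bᵀ.mulVec (fun _ => (1:ℝ)) = fun _ => (1:ℝ) := by
      ext j
      simp only [Matrix.mulVec, dotProduct, Matrix.transpose_apply, hBapply, mul_one]
      rw [← Finset.sum_div]
      have h1 : (∑ i, M i j) = csum M j := rfl
      rw [h1, ← hMbal j]
      exact div_self (hMπ j).ne'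
    have hkerB : ∀ x, B.mulVec x = x → ∃ c : ℝ, x = c • (fun i => rsum M i) := by
      intro x hx
      set z : Fin (m+1) → ℝ := fun j => x j / rsum M j with hzdef
      have hlz : (lap M).mulVec z = 0 := by
        ext i
        rw [lap_mulVec]
        have h1 : rsum M i * z i = x i := by
          have hzi : z i = x i / rsum M i := rfl
          rw [hzi, mul_comm, div_mul_cancel₀ _ (hMπ i).ne']
        have h2 : (∑ j, M i j * z j) = x i := by
          have h3 := congrFun hx i
          rw [← h3]
          simp only [Matrix.mulVec, dotProduct, hBapply, hzdef]
          exact Finset.sum_congr rfl fun j _ => by ring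
        rw [h1, h2]
        simp
      obtain ⟨c, hc⟩ := hker z hlz
      refine ⟨c, funext fun j => ?_⟩
      have h4 := congrFun hc j
      have h5 : z j = c := by simpa using h4
      have h6 : x j / rsum M j = c := h5
      have h7 : x j = c * rsum M j := (div_eq_iff (hMπ j).ne').mp h6
      simpa using h7
    have hkerTB : ∀ y, Bᵀ.mulVec y = y → ∃ c : ℝ, y = c • (fun _ => (1:ℝ)) := by
      intro y hy
      have hlz : (lap M)ᵀ.mulVec y = 0 := by
        ext j
        rw [lap_transpose_mulVec]
        have h0 : (∑ i, M i j / rsum M j * y i) = y j := by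
          have := congrFun hy j
          simpa [Matrix.mulVec, dotProduct, Matrix.transpose_apply, hBapply] using this
        have h1 : (∑ i, M i j * y i) / rsum M j = y j := by
          rw [← h0, Finset.sum_div]
          exact Finset.sum_congr rfl fun i _ => by ring
        have h2 : (∑ i, M i j * y i) = y j * rsum M j := (div_eq_iff (hMπ j).ne').mp h1
        rw [h2]
        simp [mul_comm]
      exact hkerT y hlz
    exact algpos_criterion (Nat.succ_pos m) B (fun i => rsum M i) hMπ hBu hBt hkerB hkerTB
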